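/- Let X be a real Hilbert space, V a closed subspace of X, and P : X → X the orthogonal projection onto V. Fix T > 0, a positive integer M, τ = T/M and t_n = nτ. Let u : ℝ → X be continuously differentiable on [0,T] and set S = (τ Σ_{n=0}^M ‖u(t_n) − P u(t_n)‖²)^{1/2}. Then for every 0 ≤ n ≤ M one has ‖u(t_n) − P u(t_n)‖ ≤ √2 · c_A · S^{1/2} · (∫_0^T ‖u'(t) − P u'(t)‖² dt)^{1/4} + S/√T. Moreover, if Σ_{n=0}^M (u(t_n) − P u(t_n)) = 0, the term S/√T can be omitted. -/

import Mathlib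

open MeasureTheory Set Finset

/-- subadditivity of sqrt -/
lemma sqrt_add_le' {x y : ℝ} (hx : 0 ≤ x) (hy : 0 ≤ y) :
    Real.sqrt (x + y) ≤ Real.sqrt x + Real.sqrt y := by
  have h1 : x + y ≤ (Real.sqrt x + Real.sqrt y) ^ 2 := by
    nlinarith [Real.sq_sqrt hx, Real.sq_sqrt hy, Real.sqrt_nonneg x, Real.sqrt_nonneg y]
  calc Real.sqrt (x + y) ≤ Real.sqrt ((Real.sqrt x + Real.sqrt y) ^ 2) := Real.sqrt_le_sqrt h1
    _ = Real.sqrt x + Real.sqrt y := Real.sqrt_sq (by positivity)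

/-- Cauchy-Schwarz for interval integrals of norms of continuous functions -/
lemma integral_norm_sq_le {X : Type*} [NormedAddCommGroup X]
    {a b : ℝ} (hab : a ≤ b) {f : ℝ → X} (hf : ContinuousOn f (Set.Icc a b)) :
    (∫ t in a..b, ‖f t‖) ^ 2 ≤ (b - a) * ∫ t in a..b, ‖f t‖ ^ 2 := by
  have huIcc : Set.uIcc a b = Set.Icc a b := Set.uIcc_of_le hab
  have h1 : IntervalIntegrable (fun t => ‖f t‖) volume a b := by
    refine ContinuousOn.intervalIntegrable ?_
    rw [huIcc]; exact hf.norm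
  have h2 : IntervalIntegrable (fun t => ‖f t‖ ^ 2) volume a b := by
    refine ContinuousOn.intervalIntegrable ?_
    rw [huIcc]; exact (hf.norm).pow 2
  set A := ∫ t in a..b, ‖f t‖ ^ 2 with hA
  set B := ∫ t in a..b, ‖f t‖ with hB
  have hA0 : 0 ≤ A := intervalIntegral.integral_nonneg hab (fun x _ => by positivity)
  have hB0 : 0 ≤ B := intervalIntegral.integral_nonneg hab (fun x _ => norm_nonneg _)
  have hL0 : 0 ≤ b - a := by linarith
  have key : ∀ ε : ℝ, 0 < ε → 2 * B ≤ ε * A + (b - a) / ε := by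
    intro ε hε
    have hpt : ∀ x ∈ Set.Icc a b, 2 * ‖f x‖ ≤ ε * ‖f x‖ ^ 2 + 1 / ε := by
      intro x _
      have h := sq_nonneg (ε * ‖f x‖ - 1)
      have : ε * (2 * ‖f x‖) ≤ ε * (ε * ‖f x‖ ^ 2 + 1 / ε) := by
        field_simp
        nlinarith
      exact le_of_mul_le_mul_left this hε
    have hint1 : IntervalIntegrable (fun t => 2 * ‖f t‖) volume a b := h1.const_mul 2
    have hint2 : IntervalIntegrable (fun t => ε * ‖f t‖ ^ 2 + 1 / ε) volume a b :=
      (h2.const_mul ε).add intervalIntegrable_const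
    have := intervalIntegral.integral_mono_on hab hint1 hint2 hpt
    rw [intervalIntegral.integral_const_mul, intervalIntegral.integral_add (h2.const_mul ε)
      intervalIntegrable_const, intervalIntegral.integral_const_mul,
      intervalIntegral.integral_const, smul_eq_mul] at this
    calc 2 * B ≤ ε * A + (b - a) * (1 / ε) := this
      _ = ε * A + (b - a) / ε := by ring
  rcases eq_or_lt_of_le hA0 with h | h
  · -- A = 0
    have hBz : B ≤ 0 := by
      by_contra hB'
      push_neg at hB'
      have hk := key ((b - a + 1) / B) (by positivity)
      rw [← h] at hk
      rw [div_div_eq_mul_div] at hk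
      have : (b - a) * B / (b - a + 1) < B := by
        rw [div_lt_iff₀ (by linarith)]
        nlinarith
      nlinarith
    have : B = 0 := le_antisymm hBz hB0
    rw [this, ← h]
    norm_num
  · -- A > 0
    rcases eq_or_lt_of_le hL0 with hL | hL
    · -- b = a : then A = 0, contradiction? no: b - a = 0 ⇒ integral = 0
      have hba : b = a := by linarith
      subst hba
      simp only [intervalIntegral.integral_same] at hA hB
      rw [hB]
      simp
    · set ε := Real.sqrt ((b - a) / A) with hε
      have hε0 : 0 < ε := Real.sqrt_pos.2 (by positivity)
      have hε2 : ε ^ 2 = (b - a) / A := Real.sq_sqrt (by positivity)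
      have hεA : ε ^ 2 * A = b - a := by rw [hε2]; field_simp
      have hk := key ε hε0
      have h2' : (b - a) / ε = ε * A := by
        rw [← hεA]; field_simp
      rw [h2'] at hk
      -- 2B ≤ 2 ε A, so B ≤ ε A, B² ≤ ε² A² = (b-a) A
      nlinarith [sq_nonneg (B - ε * A)]

/-- |‖a‖² - ‖b‖²| ≤ ‖a-b‖(‖a‖+‖b‖) -/
lemma abs_normsq_sub_le {X : Type*} [NormedAddCommGroup X] [InnerProductSpace ℝ X]
    (a b : X) : |‖a‖ ^ 2 - ‖b‖ ^ 2| ≤ ‖a - b‖ * (‖a‖ + ‖b‖) := by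
  have e : (inner ℝ (a - b) (a + b) : ℝ) = ‖a‖ ^ 2 - ‖b‖ ^ 2 := by
    simp only [inner_sub_left, inner_add_right, real_inner_self_eq_norm_sq]
    have := real_inner_comm a b
    linarith
  calc |‖a‖ ^ 2 - ‖b‖ ^ 2| = |(inner ℝ (a - b) (a + b) : ℝ)| := by rw [e]
    _ ≤ ‖a - b‖ * ‖a + b‖ := abs_real_inner_le_norm _ _
    _ ≤ ‖a - b‖ * (‖a‖ + ‖b‖) := by
        gcongr
        exact norm_add_le _ _

/-- discrete telescoping bound -/
lemma tele_bound {X : Type*} [NormedAddCommGroup X] [InnerProductSpace ℝ X]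
    {M : ℕ} (f : ℕ → X) {n m : ℕ} (hn : n ≤ M) (hm : m ≤ M) :
    ‖f n‖ ^ 2 ≤ ‖f m‖ ^ 2 +
      ∑ k ∈ Finset.range M, ‖f (k + 1) - f k‖ * (‖f (k + 1)‖ + ‖f k‖) := by
  have habs : ∀ p q : ℕ, p ≤ q → q ≤ M → |‖f q‖ ^ 2 - ‖f p‖ ^ 2| ≤
      ∑ k ∈ Finset.range M, ‖f (k + 1) - f k‖ * (‖f (k + 1)‖ + ‖f k‖) := by
    intro p q hpq hq
    have e1 : ‖f q‖ ^ 2 - ‖f p‖ ^ 2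
        = ∑ k ∈ Finset.Ico p q, (‖f (k + 1)‖ ^ 2 - ‖f k‖ ^ 2) := by
      rw [Finset.sum_Ico_eq_sub _ hpq,
        Finset.sum_range_sub (fun k => ‖f k‖ ^ 2),
        Finset.sum_range_sub (fun k => ‖f k‖ ^ 2)]
      ring
    rw [e1]
    calc |∑ k ∈ Finset.Ico p q, (‖f (k + 1)‖ ^ 2 - ‖f k‖ ^ 2)|
        ≤ ∑ k ∈ Finset.Ico p q, |‖f (k + 1)‖ ^ 2 - ‖f k‖ ^ 2| :=
          Finset.abs_sum_le_sum_abs _ _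
      _ ≤ ∑ k ∈ Finset.Ico p q, ‖f (k + 1) - f k‖ * (‖f (k + 1)‖ + ‖f k‖) :=
          Finset.sum_le_sum fun k _ => abs_normsq_sub_le _ _
      _ ≤ ∑ k ∈ Finset.range M, ‖f (k + 1) - f k‖ * (‖f (k + 1)‖ + ‖f k‖) := by
          apply Finset.sum_le_sum_of_subset_of_nonneg
          · intro k hk
            simp only [Finset.mem_Ico, Finset.mem_range] at *
            omega
          · intro k _ _
            positivity
  rcases le_total m n with h | h
  · have := habs m n h hn
    rw [abs_le] at this
    linarith [this.2]
  · have := habs n m h hm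
    rw [abs_le] at this
    linarith [this.1]

noncomputable def cA : ℝ := Real.sqrt (2 + Real.sqrt 2 / 2)

set_option maxHeartbeats 2000000 in
/-- Theorem 2.1 of the paper: pointwise POD projection error bound for snapshots
of a function `u ∈ H¹(0,T,X)`, with `S` the averaged projection error
(equal to `(τ(M+1) Σ_{k>r} σ_k²)^{1/2}` by the POD identity); the term `S/√T`
can be dropped when the projection errors of the snapshots have zero mean. -/
theorem pointwise_pod_error_H1
    {X : Type*} [NormedAddCommGroup X] [InnerProductSpace ℝ X] [CompleteSpace X]
    (V : Submodule ℝ X) [CompleteSpace V]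
    (T : ℝ) (hT : 0 < T) (M : ℕ) (hM : 0 < M)
    (τ : ℝ) (hτ : τ = T / M)
    (u : ℝ → X) (hu : ContDiffOn ℝ 1 u (Set.Icc 0 T))
    (S : ℝ)
    (hS : S = Real.sqrt (τ * ∑ n ∈ Finset.range (M + 1),
        ‖u ((n:ℝ) * τ) - (Submodule.orthogonalProjectionOnto V (u ((n:ℝ) * τ)) : X)‖^2)) :
    (∀ n ≤ M,
      ‖u ((n:ℝ) * τ) - (Submodule.orthogonalProjectionOnto V (u ((n:ℝ) * τ)) : X)‖ ≤
        Real.sqrt 2 * cA * S ^ ((1:ℝ)/2) *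
          (∫ t in (0:ℝ)..T,
            ‖derivWithin u (Set.Icc 0 T) t
              - (Submodule.orthogonalProjectionOnto V (derivWithin u (Set.Icc 0 T) t) : X)‖^2) ^ ((1:ℝ)/4)
        + S / Real.sqrt T)
    ∧ ((∑ n ∈ Finset.range (M + 1),
          (u ((n:ℝ) * τ) - (Submodule.orthogonalProjectionOnto V (u ((n:ℝ) * τ)) : X))) = 0 →
        ∀ n ≤ M,
          ‖u ((n:ℝ) * τ) - (Submodule.orthogonalProjectionOnto V (u ((n:ℝ) * τ)) : X)‖ ≤
            Real.sqrt 2 * cA * S ^ ((1:ℝ)/2) *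
              (∫ t in (0:ℝ)..T,
                ‖derivWithin u (Set.Icc 0 T) t
                  - (Submodule.orthogonalProjectionOnto V (derivWithin u (Set.Icc 0 T) t) : X)‖^2) ^ ((1:ℝ)/4)) := by
  classical
  have hMpos : (0:ℝ) < M := by exact_mod_cast hM
  have hτ0 : 0 < τ := by rw [hτ]; positivity
  have hMτ : (M:ℝ) * τ = T := by rw [hτ]; field_simp
  set P : X →L[ℝ] X := V.subtypeL.comp (Submodule.orthogonalProjectionOnto V) with hP
  have hPapp : ∀ x : X, P x = (Submodule.orthogonalProjectionOnto V x : X) := fun x => rfl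
  set e : ℕ → X := fun n => u ((n:ℝ) * τ) - (Submodule.orthogonalProjectionOnto V (u ((n:ℝ) * τ)) : X)
    with he
  set w : ℝ → X := fun t => derivWithin u (Set.Icc 0 T) t
    - (Submodule.orthogonalProjectionOnto V (derivWithin u (Set.Icc 0 T) t) : X) with hw
  set I : ℝ := ∫ t in (0:ℝ)..T, ‖w t‖ ^ 2 with hI
  set tk : ℕ → ℝ := fun k => (k:ℝ) * τ with htk
  have hTnn : (0:ℝ) ≤ T := hT.le
  have hu'cont : ContinuousOn (derivWithin u (Set.Icc 0 T)) (Set.Icc 0 T) :=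
    hu.continuousOn_derivWithin (uniqueDiffOn_Icc hT) le_rfl
  have hwcont : ContinuousOn w (Set.Icc 0 T) := by
    rw [hw]
    have h1 : ContinuousOn (fun t => P (derivWithin u (Set.Icc 0 T) t)) (Set.Icc 0 T) :=
      P.continuous.comp_continuousOn hu'cont
    exact hu'cont.sub h1
  have hI0 : 0 ≤ I := by
    rw [hI]
    exact intervalIntegral.integral_nonneg hTnn (fun x _ => by positivity)
  have hucont : ContinuousOn (fun t => u t - P (u t)) (Set.Icc 0 T) :=
    hu.continuousOn.sub (P.continuous.comp_continuousOn hu.continuousOn)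
  have hsub : ∀ k : ℕ, k < M → Set.Icc (tk k) (tk (k+1)) ⊆ Set.Icc (0:ℝ) T := by
    intro k hk
    rw [htk]
    apply Set.Icc_subset_Icc
    · positivity
    · have h1 : ((k:ℝ)+1) ≤ (M:ℝ) := by exact_mod_cast hk
      push_cast
      calc ((k:ℝ)+1) * τ ≤ (M:ℝ) * τ := mul_le_mul_of_nonneg_right h1 hτ0.le
        _ = T := hMτ
  have hab : ∀ k : ℕ, tk k ≤ tk (k+1) := by
    intro k
    rw [htk]
    push_cast
    nlinarith [hτ0]
  have htkd : ∀ k : ℕ, tk (k+1) - tk k = τ := by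
    intro k
    rw [htk]
    push_cast
    ring
  have hwint : ∀ k : ℕ, k < M →
      IntervalIntegrable w MeasureTheory.volume (tk k) (tk (k+1)) := by
    intro k hk
    refine ContinuousOn.intervalIntegrable ?_
    rw [Set.uIcc_of_le (hab k)]
    exact hwcont.mono (hsub k hk)
  have hwsqint : ∀ k : ℕ, k < M →
      IntervalIntegrable (fun t => ‖w t‖^2) MeasureTheory.volume (tk k) (tk (k+1)) := by
    intro k hk
    refine ContinuousOn.intervalIntegrable ?_
    rw [Set.uIcc_of_le (hab k)]
    exact ((hwcont.mono (hsub k hk)).norm).pow 2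
  -- FTC on each subinterval
  have hd : ∀ k : ℕ, k < M → e (k+1) - e k = ∫ t in (tk k)..(tk (k+1)), w t := by
    intro k hk
    have hderiv' : ∀ x ∈ Set.Ioo (tk k) (tk (k+1)),
        HasDerivWithinAt (fun t => u t - P (u t)) (w x) (Set.Ioi x) x := by
      intro x hx
      have hx0T : x ∈ Set.Ioo (0:ℝ) T := by
        have h1 : (0:ℝ) ≤ tk k := by rw [htk]; positivity
        have h2 : tk (k+1) ≤ T := by
          have h3 : ((k:ℝ)+1) ≤ (M:ℝ) := by exact_mod_cast hk
          rw [htk]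
          push_cast
          calc ((k:ℝ)+1) * τ ≤ (M:ℝ) * τ := mul_le_mul_of_nonneg_right h3 hτ0.le
            _ = T := hMτ
      
        exact ⟨lt_of_le_of_lt h1 hx.1, lt_of_lt_of_le hx.2 h2⟩
      have hx1 : HasDerivWithinAt u (derivWithin u (Set.Icc 0 T) x) (Set.Icc 0 T) x :=
        ((hu.differentiableOn one_ne_zero) x ⟨hx0T.1.le, hx0T.2.le⟩).hasDerivWithinAt
      have hx2 : HasDerivAt u (derivWithin u (Set.Icc 0 T) x) x :=
        hx1.hasDerivAt (Icc_mem_nhds hx0T.1 hx0T.2)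
      have hx3 : HasDerivAt (fun t => P (u t)) (P (derivWithin u (Set.Icc 0 T) x)) x :=
        (P.hasFDerivAt.comp_hasDerivAt x hx2)
      have hx4 := (hx2.sub hx3).hasDerivWithinAt (s := Set.Ioi x)
      rw [hw]
      exact hx4
    have hftc := intervalIntegral.integral_eq_sub_of_hasDeriv_right_of_le (hab k)
      (hucont.mono (hsub k hk)) hderiv' (hwint k hk)
    rw [hftc, he, htk]
    simp only [hPapp]
    try push_cast
    try ring_nf
  -- sum of the integrals over adjacent intervals is the full integral
  have hsum_I : ∑ k ∈ Finset.range M, (∫ t in (tk k)..(tk (k+1)), ‖w t‖^2) = I := by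
    have h := intervalIntegral.sum_integral_adjacent_intervals
      (a := tk) (n := M) (f := fun t => ‖w t‖^2)
      (μ := MeasureTheory.volume) (fun k hk => hwsqint k hk)
    rw [h, hI]
    have h0 : tk 0 = 0 := by rw [htk]; norm_num
    have hM' : tk M = T := by rw [htk]; exact hMτ
    rw [h0, hM']
  -- step estimate
  have hdk_sq : ∀ k : ℕ, k < M →
      ‖e (k+1) - e k‖ ^ 2 ≤ τ * ∫ t in (tk k)..(tk (k+1)), ‖w t‖^2 := by
    intro k hk
    rw [hd k hk]
    have h1 : ‖∫ t in (tk k)..(tk (k+1)), w t‖ ≤ ∫ t in (tk k)..(tk (k+1)), ‖w t‖ :=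
      intervalIntegral.norm_integral_le_integral_norm (hab k)
    have h2 : (∫ t in (tk k)..(tk (k+1)), ‖w t‖) ^ 2
        ≤ (tk (k+1) - tk k) * ∫ t in (tk k)..(tk (k+1)), ‖w t‖^2 :=
      integral_norm_sq_le (hab k) (hwcont.mono (hsub k hk))
    rw [htkd k] at h2
    have h4 : (0:ℝ) ≤ ∫ t in (tk k)..(tk (k+1)), ‖w t‖ :=
      intervalIntegral.integral_nonneg (hab k) (fun x _ => norm_nonneg _)
    nlinarith [norm_nonneg (∫ t in (tk k)..(tk (k+1)), w t)]
  -- basic quantities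
  set SS : ℝ := ∑ n ∈ Finset.range (M + 1), ‖e n‖ ^ 2 with hSS
  have hSS0 : 0 ≤ SS := Finset.sum_nonneg fun i _ => sq_nonneg _
  have hS2 : S ^ 2 = τ * SS := by
    rw [hS, hSS, he]
    exact Real.sq_sqrt (by positivity)
  have hSnn : 0 ≤ S := hS ▸ Real.sqrt_nonneg _
  set D : ℝ := ∑ k ∈ Finset.range M, ‖e (k+1) - e k‖ * (‖e (k+1)‖ + ‖e k‖) with hD
  have hD0 : 0 ≤ D := Finset.sum_nonneg fun k _ => by positivity
  have hdsq_sum : ∑ k ∈ Finset.range M, ‖e (k+1) - e k‖ ^ 2 ≤ τ * I := by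
    calc ∑ k ∈ Finset.range M, ‖e (k+1) - e k‖ ^ 2
        ≤ ∑ k ∈ Finset.range M, τ * (∫ t in (tk k)..(tk (k+1)), ‖w t‖^2) :=
          Finset.sum_le_sum fun k hk => hdk_sq k (Finset.mem_range.1 hk)
      _ = τ * I := by rw [← Finset.mul_sum, hsum_I]
  have hsum_e_sq : ∑ k ∈ Finset.range M, (‖e (k+1)‖ + ‖e k‖) ^ 2 ≤ 4 * SS := by
    have h1 : ∑ k ∈ Finset.range M, ‖e (k+1)‖ ^ 2 ≤ SS := by
      have h := Finset.sum_range_succ' (fun k => ‖e k‖ ^ 2) M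
      rw [hSS, h]
      nlinarith [sq_nonneg ‖e 0‖]
    have h2 : ∑ k ∈ Finset.range M, ‖e k‖ ^ 2 ≤ SS := by
      rw [hSS]
      apply Finset.sum_le_sum_of_subset_of_nonneg
      · exact Finset.range_subset_range.2 (Nat.le_succ M)
      · intro k _ _; positivity
    have h3 : ∑ k ∈ Finset.range M, (‖e (k+1)‖ + ‖e k‖) ^ 2
        ≤ ∑ k ∈ Finset.range M, (2 * ‖e (k+1)‖ ^ 2 + 2 * ‖e k‖ ^ 2) :=
      Finset.sum_le_sum fun k _ => by nlinarith [sq_nonneg (‖e (k+1)‖ - ‖e k‖)]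
    rw [Finset.sum_add_distrib, ← Finset.mul_sum, ← Finset.mul_sum] at h3
    linarith
  have hDle : D ≤ 2 * S * Real.sqrt I := by
    have hcs := Finset.sum_mul_sq_le_sq_mul_sq (Finset.range M)
      (fun k => ‖e (k+1) - e k‖) (fun k => ‖e (k+1)‖ + ‖e k‖)
    have hD2 : D ^ 2 ≤ 4 * S ^ 2 * I := by
      have hmm := mul_le_mul hdsq_sum hsum_e_sq
        (Finset.sum_nonneg fun k _ => by positivity) (by positivity)
      calc D ^ 2 ≤ (∑ k ∈ Finset.range M, ‖e (k+1) - e k‖ ^ 2) *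
            ∑ k ∈ Finset.range M, (‖e (k+1)‖ + ‖e k‖) ^ 2 := hcs
        _ ≤ (τ * I) * (4 * SS) := hmm
        _ = 4 * S ^ 2 * I := by rw [hS2]; ring
    calc D = Real.sqrt (D ^ 2) := (Real.sqrt_sq hD0).symm
      _ ≤ Real.sqrt (4 * S ^ 2 * I) := Real.sqrt_le_sqrt hD2
      _ = 2 * S * Real.sqrt I := by
          rw [show 4 * S ^ 2 * I = (2 * S) ^ 2 * I by ring,
            Real.sqrt_mul (by positivity), Real.sqrt_sq (by positivity)]
  -- rpow conversions
  have hrpowS : S ^ ((1:ℝ)/2) = Real.sqrt S := (Real.sqrt_eq_rpow S).symm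
  have hrpowI : I ^ ((1:ℝ)/4) = Real.sqrt (Real.sqrt I) := by
    rw [Real.sqrt_eq_rpow, Real.sqrt_eq_rpow, ← Real.rpow_mul hI0]
    norm_num
  have hcA1 : 1 ≤ cA := by
    rw [cA, show (1:ℝ) = Real.sqrt 1 by simp]
    apply Real.sqrt_le_sqrt
    nlinarith [Real.sqrt_nonneg 2]
  have hcA0 : 0 ≤ cA := Real.sqrt_nonneg _
  have hcA2 : 2 ≤ Real.sqrt 2 * cA := by
    have h1 : (Real.sqrt 2 * cA) ^ 2 = 4 + Real.sqrt 2 := by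
      rw [mul_pow, Real.sq_sqrt (by norm_num : (0:ℝ) ≤ 2), cA,
        Real.sq_sqrt (by nlinarith [Real.sqrt_nonneg 2] : (0:ℝ) ≤ 2 + Real.sqrt 2 / 2)]
      ring
    nlinarith [Real.sqrt_nonneg 2, hcA0,
      mul_nonneg (Real.sqrt_nonneg 2) hcA0]
  have hM1pos : (0:ℝ) < (M:ℝ) + 1 := by positivity
  have hτM1 : T ≤ τ * ((M:ℝ) + 1) := by nlinarith [hMτ, hτ0]
  constructor
  · -- Part 1
    intro n hn
    have hsumtele : ((M:ℝ) + 1) * ‖e n‖ ^ 2 ≤ SS + ((M:ℝ) + 1) * D := by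
      have h := Finset.sum_le_sum
        (fun m hm => tele_bound e hn (Nat.lt_succ_iff.1 (Finset.mem_range.1 hm)))
        (s := Finset.range (M + 1))
        (f := fun _ => ‖e n‖ ^ 2)
      simp only [Finset.sum_add_distrib, Finset.sum_const, Finset.card_range,
        nsmul_eq_mul] at h
      rw [← hD, ← hSS] at h
      push_cast at h ⊢
      linarith
    have hen2 : ‖e n‖ ^ 2 ≤ S ^ 2 / T + 2 * S * Real.sqrt I := by
      have h1 : ‖e n‖ ^ 2 ≤ SS / ((M:ℝ) + 1) + D := by
        have h2 : ((M:ℝ) + 1) * ‖e n‖ ^ 2 ≤ ((M:ℝ) + 1) * (SS / ((M:ℝ) + 1) + D) := by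
          rw [mul_add, mul_div_cancel₀ _ (ne_of_gt hM1pos)]
          linarith
        exact le_of_mul_le_mul_left h2 hM1pos
      have h2 : SS / ((M:ℝ) + 1) ≤ S ^ 2 / T := by
        rw [div_le_div_iff₀ hM1pos hT]
        nlinarith [hS2, hSS0, hτM1]
      linarith [hDle]
    have hfin : ‖e n‖ ≤ Real.sqrt 2 * Real.sqrt S * Real.sqrt (Real.sqrt I) + S / Real.sqrt T := by
      have h1 : ‖e n‖ ≤ Real.sqrt (S ^ 2 / T + 2 * S * Real.sqrt I) := by
        rw [← Real.sqrt_sq (norm_nonneg (e n))]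
        exact Real.sqrt_le_sqrt hen2
      have h2 : Real.sqrt (S ^ 2 / T + 2 * S * Real.sqrt I)
          ≤ Real.sqrt (S ^ 2 / T) + Real.sqrt (2 * S * Real.sqrt I) :=
        sqrt_add_le' (by positivity) (by positivity)
      have h3 : Real.sqrt (S ^ 2 / T) = S / Real.sqrt T := by
        rw [Real.sqrt_div (sq_nonneg S), Real.sqrt_sq hSnn]
      have h4 : Real.sqrt (2 * S * Real.sqrt I)
          = Real.sqrt 2 * Real.sqrt S * Real.sqrt (Real.sqrt I) := by
        rw [Real.sqrt_mul (by positivity), Real.sqrt_mul (by norm_num)]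
      rw [h3, h4] at h2
      linarith
    have hmono : Real.sqrt 2 * Real.sqrt S * Real.sqrt (Real.sqrt I)
        ≤ Real.sqrt 2 * cA * Real.sqrt S * Real.sqrt (Real.sqrt I) := by
      have h2 : Real.sqrt 2 ≤ Real.sqrt 2 * cA := by
        nlinarith [Real.sqrt_nonneg 2, hcA1]
      apply mul_le_mul_of_nonneg_right _ (Real.sqrt_nonneg _)
      apply mul_le_mul_of_nonneg_right h2 (Real.sqrt_nonneg _)
    have hkey : ‖e n‖ ≤ Real.sqrt 2 * cA * S ^ ((1:ℝ)/2) * I ^ ((1:ℝ)/4) + S / Real.sqrt T := by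
      rw [hrpowS, hrpowI]
      linarith
    exact hkey
  · -- Part 2: zero mean
    intro hzero n hn
    have hzero' : ∑ m ∈ Finset.range (M + 1), e m = 0 := by
      rw [he]; exact hzero
    have hexp : ∑ m ∈ Finset.range (M + 1), ‖e n - e m‖ ^ 2
        = ((M:ℝ) + 1) * ‖e n‖ ^ 2 + SS := by
      calc ∑ m ∈ Finset.range (M + 1), ‖e n - e m‖ ^ 2
          = ∑ m ∈ Finset.range (M + 1),
              (‖e n‖ ^ 2 - 2 * (inner ℝ (e n) (e m) : ℝ) + ‖e m‖ ^ 2) :=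
            Finset.sum_congr rfl fun m _ => norm_sub_sq_real _ _
        _ = ((M:ℝ) + 1) * ‖e n‖ ^ 2
            - 2 * (inner ℝ (e n) (∑ m ∈ Finset.range (M + 1), e m) : ℝ) + SS := by
            rw [Finset.sum_add_distrib, Finset.sum_sub_distrib, Finset.sum_const,
              Finset.card_range, nsmul_eq_mul, ← Finset.mul_sum, inner_sum, hSS]
            push_cast
            ring
        _ = ((M:ℝ) + 1) * ‖e n‖ ^ 2 + SS := by
            rw [hzero', inner_zero_right]
            ring
    set K : ℝ := ∑ k ∈ Finset.range M, ‖e (k+1) - e k‖ with hK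
    have hK0 : 0 ≤ K := Finset.sum_nonneg fun k _ => norm_nonneg _
    have hKle : K ≤ Real.sqrt T * Real.sqrt I := by
      have hcs := Finset.sum_mul_sq_le_sq_mul_sq (Finset.range M)
        (fun k => ‖e (k+1) - e k‖) (fun _ => (1:ℝ))
      simp only [mul_one, one_pow, Finset.sum_const, Finset.card_range, nsmul_eq_mul] at hcs
      have hK2 : K ^ 2 ≤ T * I := by
        calc K ^ 2 ≤ (∑ k ∈ Finset.range M, ‖e (k+1) - e k‖ ^ 2) * (M:ℝ) := by
              rw [hK]; push_cast at hcs ⊢; linarith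
          _ ≤ (τ * I) * (M:ℝ) :=
              mul_le_mul_of_nonneg_right hdsq_sum (by positivity)
          _ = T * I := by rw [← hMτ]; ring
      calc K = Real.sqrt (K ^ 2) := (Real.sqrt_sq hK0).symm
        _ ≤ Real.sqrt (T * I) := Real.sqrt_le_sqrt hK2
        _ = Real.sqrt T * Real.sqrt I := Real.sqrt_mul hTnn I
    have htele2 : ∀ m : ℕ, m ≤ M → ‖e n - e m‖ ^ 2 ≤ D + 2 * ‖e m‖ * K := by
      intro m hm
      have h1 := tele_bound (fun k => e k - e m) hn hm
      simp only [sub_self, norm_zero] at h1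
      have h2 : ∑ k ∈ Finset.range M,
          ‖(e (k+1) - e m) - (e k - e m)‖ * (‖e (k+1) - e m‖ + ‖e k - e m‖)
          ≤ D + 2 * ‖e m‖ * K := by
        have hterm : ∀ k : ℕ,
            ‖(e (k+1) - e m) - (e k - e m)‖ * (‖e (k+1) - e m‖ + ‖e k - e m‖)
            ≤ ‖e (k+1) - e k‖ * (‖e (k+1)‖ + ‖e k‖) + 2 * ‖e m‖ * ‖e (k+1) - e k‖ := by
          intro k
          have hc : (e (k+1) - e m) - (e k - e m) = e (k+1) - e k := by abel
          rw [hc]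
          have h3 : ‖e (k+1) - e m‖ ≤ ‖e (k+1)‖ + ‖e m‖ := norm_sub_le _ _
          have h4 : ‖e k - e m‖ ≤ ‖e k‖ + ‖e m‖ := norm_sub_le _ _
          nlinarith [norm_nonneg (e (k+1) - e k), norm_nonneg (e m),
            norm_nonneg (e (k+1)), norm_nonneg (e k)]
        calc ∑ k ∈ Finset.range M,
            ‖(e (k+1) - e m) - (e k - e m)‖ * (‖e (k+1) - e m‖ + ‖e k - e m‖)
            ≤ ∑ k ∈ Finset.range M, (‖e (k+1) - e k‖ * (‖e (k+1)‖ + ‖e k‖)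
              + 2 * ‖e m‖ * ‖e (k+1) - e k‖) := Finset.sum_le_sum fun k _ => hterm k
          _ = D + 2 * ‖e m‖ * K := by
              rw [Finset.sum_add_distrib, ← Finset.mul_sum, ← hD, ← hK]
      calc ‖e n - e m‖ ^ 2 ≤ 0 ^ 2 + ∑ k ∈ Finset.range M,
            ‖(e (k+1) - e m) - (e k - e m)‖ * (‖e (k+1) - e m‖ + ‖e k - e m‖) := h1
        _ ≤ D + 2 * ‖e m‖ * K := by
            rw [zero_pow (by norm_num : (2:ℕ) ≠ 0), zero_add]
            exact h2
    have hsqT : (0:ℝ) < Real.sqrt T := Real.sqrt_pos.2 hT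
    have hsum_norm_e : ∑ m ∈ Finset.range (M + 1), ‖e m‖ ≤ ((M:ℝ) + 1) * S / Real.sqrt T := by
      have hcs := Finset.sum_mul_sq_le_sq_mul_sq (Finset.range (M + 1))
        (fun m => ‖e m‖) (fun _ => (1:ℝ))
      simp only [mul_one, one_pow, Finset.sum_const, Finset.card_range, nsmul_eq_mul] at hcs
      set Se : ℝ := ∑ m ∈ Finset.range (M + 1), ‖e m‖ with hSe
      have hSe0 : 0 ≤ Se := Finset.sum_nonneg fun m _ => norm_nonneg _
      have h1 : Se ^ 2 ≤ SS * ((M:ℝ) + 1) := by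
        rw [hSe, hSS]
        push_cast at hcs ⊢
        linarith
      have hRHS0 : 0 ≤ ((M:ℝ) + 1) * S / Real.sqrt T := by positivity
      have h2 : Se ^ 2 ≤ (((M:ℝ) + 1) * S / Real.sqrt T) ^ 2 := by
        rw [div_pow, Real.sq_sqrt hTnn, le_div_iff₀ hT]
        have haux : SS * ((M:ℝ) + 1) * T ≤ (((M:ℝ) + 1) * S) ^ 2 := by
          have h5 : (((M:ℝ) + 1) * S) ^ 2 = ((M:ℝ) + 1) ^ 2 * (τ * SS) := by
            rw [← hS2]; ring
          rw [h5]
          nlinarith [hτM1, mul_nonneg hSS0 hM1pos.le]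
        have h6 := mul_le_mul_of_nonneg_right h1 hTnn
        linarith
      calc Se = Real.sqrt (Se ^ 2) := (Real.sqrt_sq hSe0).symm
        _ ≤ Real.sqrt ((((M:ℝ) + 1) * S / Real.sqrt T) ^ 2) := Real.sqrt_le_sqrt h2
        _ = ((M:ℝ) + 1) * S / Real.sqrt T := Real.sqrt_sq hRHS0
    have hsum2 : ∑ m ∈ Finset.range (M + 1), ‖e n - e m‖ ^ 2
        ≤ ((M:ℝ) + 1) * D + 2 * K * (∑ m ∈ Finset.range (M + 1), ‖e m‖) := by
      calc ∑ m ∈ Finset.range (M + 1), ‖e n - e m‖ ^ 2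
          ≤ ∑ m ∈ Finset.range (M + 1), (D + 2 * ‖e m‖ * K) :=
            Finset.sum_le_sum fun m hm => htele2 m (Nat.lt_succ_iff.1 (Finset.mem_range.1 hm))
        _ = ((M:ℝ) + 1) * D + 2 * K * (∑ m ∈ Finset.range (M + 1), ‖e m‖) := by
            rw [Finset.sum_add_distrib, Finset.sum_const, Finset.card_range, nsmul_eq_mul]
            have h7 : ∑ m ∈ Finset.range (M + 1), 2 * ‖e m‖ * K
                = 2 * K * ∑ m ∈ Finset.range (M + 1), ‖e m‖ := by
              rw [Finset.mul_sum]
              exact Finset.sum_congr rfl fun m _ => by ring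
            rw [h7]
            push_cast
            ring
    have h2K : 2 * K * (∑ m ∈ Finset.range (M + 1), ‖e m‖)
        ≤ ((M:ℝ) + 1) * (2 * S * Real.sqrt I) := by
      have hsum0 : 0 ≤ ∑ m ∈ Finset.range (M + 1), ‖e m‖ :=
        Finset.sum_nonneg fun m _ => norm_nonneg _
      have hmul := mul_le_mul hKle hsum_norm_e hsum0 (by positivity)
      have heq : Real.sqrt T * Real.sqrt I * (((M:ℝ) + 1) * S / Real.sqrt T)
          = ((M:ℝ) + 1) * S * Real.sqrt I := by
        field_simp
      rw [heq] at hmul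
      nlinarith
    have hDmul : ((M:ℝ) + 1) * D ≤ ((M:ℝ) + 1) * (2 * S * Real.sqrt I) := by
      nlinarith [hDle, hM1pos]
    have hen2 : ‖e n‖ ^ 2 ≤ 4 * S * Real.sqrt I := by
      have h1 : ((M:ℝ) + 1) * ‖e n‖ ^ 2 ≤ ((M:ℝ) + 1) * (4 * S * Real.sqrt I) := by
        have := hexp
        nlinarith [hSS0]
      exact le_of_mul_le_mul_left h1 hM1pos
    have hen : ‖e n‖ ≤ 2 * Real.sqrt S * Real.sqrt (Real.sqrt I) := by
      calc ‖e n‖ = Real.sqrt (‖e n‖ ^ 2) := (Real.sqrt_sq (norm_nonneg _)).symm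
        _ ≤ Real.sqrt (4 * S * Real.sqrt I) := Real.sqrt_le_sqrt hen2
        _ = 2 * Real.sqrt S * Real.sqrt (Real.sqrt I) := by
            rw [Real.sqrt_mul (by positivity), Real.sqrt_mul (by norm_num : (0:ℝ) ≤ 4),
              show Real.sqrt 4 = 2 from by
                rw [show (4:ℝ) = 2^2 by norm_num, Real.sqrt_sq (by norm_num : (0:ℝ) ≤ 2)]]
    have hkey : ‖e n‖ ≤ Real.sqrt 2 * cA * S ^ ((1:ℝ)/2) * I ^ ((1:ℝ)/4) := by
      rw [hrpowS, hrpowI]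
      have h0 : 0 ≤ Real.sqrt S * Real.sqrt (Real.sqrt I) := by positivity
      nlinarith [hcA2, hen]
    exact hkey
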